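/- For every norm ⦀·⦀ on ℝ^d and every function φ : {0,…,d} → [0,∞) with φ(0) = 0, the Capra biconjugate of φ∘ℓ0 satisfies, for all x ∈ ℝ^d with x ≠ 0, (φ∘ℓ0)^{¢¢'}(x) = (1/⦀x⦀) · min{ Σ_{l=1}^{d} φ(l) ⦀z^{(l)}⦀_l : z^{(1)},…,z^{(d)} ∈ ℝ^d, Σ_{l=1}^{d} ⦀z^{(l)}⦀_l ≤ ⦀x⦀, Σ_{l=1}^{d} z^{(l)} = x }, where the minimum is attained. -/

import Mathlib

open scoped BigOperators

noncomputable section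

/-- The Euclidean pairing `⟨x,y⟩ = ∑ i, x i * y i` on `Fin d → ℝ`. -/
def dotp {d : ℕ} (x y : Fin d → ℝ) : ℝ := ∑ i, x i * y i

/-- The coordinate subspace `R_K` of vectors vanishing outside `K`. -/
def RK {d : ℕ} (K : Finset (Fin d)) : Set (Fin d → ℝ) := {x | ∀ j ∉ K, x j = 0}

/-- Orthogonal projection onto `R_K`. -/
def projK {d : ℕ} (K : Finset (Fin d)) (x : Fin d → ℝ) : Fin d → ℝ :=
  fun i => if i ∈ K then x i else 0

/-- The ℓ0 pseudonorm: number of nonzero components. -/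
def ell0 {d : ℕ} (x : Fin d → ℝ) : ℕ := (Function.support x).ncard

/-- `N` is a norm on `ℝ^d`. -/
structure IsNorm {d : ℕ} (N : (Fin d → ℝ) → ℝ) : Prop where
  eq_zero_iff : ∀ x, N x = 0 ↔ x = 0
  smul : ∀ (c : ℝ) (x : Fin d → ℝ), N (c • x) = |c| * N x
  triangle : ∀ x y, N (x + y) ≤ N x + N y

/-- `⦀y⦀_{K,★}`: the dual norm (w.r.t. the Euclidean pairing), on the subspace `R_K`,
of the restriction of `N` to `R_K`. -/
def restStar {d : ℕ} (N : (Fin d → ℝ) → ℝ) (K : Finset (Fin d)) (y : Fin d → ℝ) : ℝ :=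
  sSup {r | ∃ x ∈ RK K, N x ≤ 1 ∧ r = dotp x y}

/-- The dual coordinate-k norm `⦀y⦀_{k,★} = sup_{|K| ≤ k} ⦀y_K⦀_{K,★}`. -/
def dualCoord {d : ℕ} (N : (Fin d → ℝ) → ℝ) (k : ℕ) (y : Fin d → ℝ) : ℝ :=
  sSup {r | ∃ K : Finset (Fin d), K.card ≤ k ∧ r = restStar N K (projK K y)}

/-- The coordinate-k norm: the dual norm of the dual coordinate-k norm. -/
def coordNorm {d : ℕ} (N : (Fin d → ℝ) → ℝ) (k : ℕ) (x : Fin d → ℝ) : ℝ :=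
  sSup {r | ∃ y : Fin d → ℝ, dualCoord N k y ≤ 1 ∧ r = dotp x y}

/-- The Capra coupling `¢(x,y) = ⟨x,y⟩/⦀x⦀` (with `¢(0,y) = 0`). -/
def capra {d : ℕ} (N : (Fin d → ℝ) → ℝ) (x y : Fin d → ℝ) : ℝ :=
  if x = 0 then 0 else dotp x y / N x

/-- Capra conjugate `f^¢(y) = sup_x ( ¢(x,y) ∔ (−f(x)) )`.
(EReal addition is the Moreau lower addition: `⊤ + ⊥ = ⊥`.) -/
def capraConj {d : ℕ} (N : (Fin d → ℝ) → ℝ) (f : (Fin d → ℝ) → EReal)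
    (y : Fin d → ℝ) : EReal :=
  ⨆ x : Fin d → ℝ, ((capra N x y : ℝ) : EReal) + (- f x)

/-- Capra biconjugate `f^{¢¢'}(x) = sup_y ( ¢(x,y) ∔ (−f^¢(y)) )`. -/
def capraBiconj {d : ℕ} (N : (Fin d → ℝ) → ℝ) (f : (Fin d → ℝ) → EReal)
    (x : Fin d → ℝ) : EReal :=
  ⨆ y : Fin d → ℝ, ((capra N x y : ℝ) : EReal) + (- capraConj N f y)

/-- Fenchel conjugate `g^★(y) = sup_x ( ⟨x,y⟩ ∔ (−g(x)) )`. -/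
def fenchelConj {d : ℕ} (g : (Fin d → ℝ) → EReal) (y : Fin d → ℝ) : EReal :=
  ⨆ x : Fin d → ℝ, ((dotp x y : ℝ) : EReal) + (- g x)

set_option maxHeartbeats 1000000

section Aux

variable {d : ℕ} {N : (Fin d → ℝ) → ℝ}

/- ## dotp lemmas -/

lemma dotp_add_left (a b y : Fin d → ℝ) : dotp (a + b) y = dotp a y + dotp b y := by
  simp [dotp, add_mul, Finset.sum_add_distrib]

lemma dotp_smul_left (c : ℝ) (a y : Fin d → ℝ) : dotp (c • a) y = c * dotp a y := by
  simp [dotp, Finset.mul_sum, mul_assoc]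

lemma dotp_neg_left (a y : Fin d → ℝ) : dotp (-a) y = - dotp a y := by
  simp [dotp, Finset.sum_neg_distrib]

lemma dotp_zero_left (y : Fin d → ℝ) : dotp 0 y = 0 := by simp [dotp]

lemma dotp_zero_right (x : Fin d → ℝ) : dotp x 0 = 0 := by simp [dotp]

lemma dotp_smul_right (c : ℝ) (a y : Fin d → ℝ) : dotp a (c • y) = c * dotp a y := by
  simp [dotp, Finset.mul_sum]; apply Finset.sum_congr rfl; intros; ring

lemma dotp_sum_left {s : Finset ℕ} (f : ℕ → Fin d → ℝ) (y : Fin d → ℝ) :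
    dotp (∑ l ∈ s, f l) y = ∑ l ∈ s, dotp (f l) y := by
  classical
  induction s using Finset.induction with
  | empty => simp [dotp]
  | @insert a s h ih => rw [Finset.sum_insert h, Finset.sum_insert h, dotp_add_left, ih]

lemma dotp_le (x y : Fin d → ℝ) : dotp x y ≤ ‖x‖ * ∑ i, |y i| := by
  calc dotp x y ≤ ∑ i, |x i * y i| := Finset.sum_le_sum fun i _ => le_abs_self _
    _ ≤ ∑ i, ‖x‖ * |y i| := by
        apply Finset.sum_le_sum; intro i _
        rw [abs_mul]
        exact mul_le_mul_of_nonneg_right (norm_le_pi_norm x i) (abs_nonneg _)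
    _ = ‖x‖ * ∑ i, |y i| := by rw [Finset.mul_sum]

/- ## basic N lemmas -/

lemma IsNorm.zero (hN : IsNorm N) : N 0 = 0 := (hN.eq_zero_iff 0).mpr rfl

lemma IsNorm.neg (hN : IsNorm N) (x : Fin d → ℝ) : N (-x) = N x := by
  have := hN.smul (-1) x
  simpa using this

lemma IsNorm.nonneg (hN : IsNorm N) (x : Fin d → ℝ) : 0 ≤ N x := by
  have h := hN.triangle x (-x)
  rw [add_neg_cancel, hN.zero, hN.neg] at h
  linarith

lemma IsNorm.sub_le (hN : IsNorm N) (a b : Fin d → ℝ) : N a - N b ≤ N (a - b) := by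
  have := hN.triangle (a - b) b
  simp only [sub_add_cancel] at this
  linarith

lemma IsNorm.sum_le (hN : IsNorm N) {s : Finset (Fin d)} (f : Fin d → Fin d → ℝ) :
    N (∑ i ∈ s, f i) ≤ ∑ i ∈ s, N (f i) := by
  classical
  induction s using Finset.induction with
  | empty => simp [hN.zero]
  | @insert a s h ih =>
      rw [Finset.sum_insert h, Finset.sum_insert h]
      exact (hN.triangle _ _).trans (by linarith)

lemma eq_sum_single (z : Fin d → ℝ) : z = ∑ i, z i • (Pi.single i 1 : Fin d → ℝ) := by
  funext j
  rw [Finset.sum_apply]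
  simp [Pi.single_apply]

lemma IsNorm.le_norm (hN : IsNorm N) (z : Fin d → ℝ) :
    N z ≤ (∑ i, N (Pi.single i 1 : _)) * ‖z‖ := by
  conv_lhs => rw [eq_sum_single z]
  calc N (∑ i, z i • (Pi.single i 1 : Fin d → ℝ)) ≤ ∑ i, N (z i • (Pi.single i 1 : Fin d → ℝ)) :=
        hN.sum_le _
    _ = ∑ i, |z i| * N (Pi.single i 1 : _) := by simp [hN.smul]
    _ ≤ ∑ i, ‖z‖ * N (Pi.single i 1 : _) := by
        apply Finset.sum_le_sum; intro i _
        exact mul_le_mul_of_nonneg_right (norm_le_pi_norm z i) (hN.nonneg _)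
    _ = (∑ i, N (Pi.single i 1 : _)) * ‖z‖ := by rw [Finset.sum_mul]; simp [mul_comm]

lemma IsNorm.continuous (hN : IsNorm N) : Continuous N := by
  set C := ∑ i, N ((Pi.single i 1 : Fin d → ℝ)) with hC
  have hC0 : 0 ≤ C := Finset.sum_nonneg fun i _ => hN.nonneg _
  apply (LipschitzWith.of_dist_le_mul (K := ⟨C, hC0⟩) ?_).continuous
  intro a b
  rw [Real.dist_eq, dist_eq_norm]
  have h1 : N a - N b ≤ C * ‖a - b‖ := (hN.sub_le a b).trans (hN.le_norm _)
  have h2 : N b - N a ≤ C * ‖a - b‖ := by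
    have := (hN.sub_le b a).trans (hN.le_norm (b - a))
    rwa [norm_sub_rev] at this
  show |N a - N b| ≤ C * ‖a - b‖
  rw [abs_le]; constructor <;> linarith

lemma IsNorm.exists_lower (hN : IsNorm N) : ∃ c > 0, ∀ z, c * ‖z‖ ≤ N z := by
  by_cases hd : ∃ v : Fin d → ℝ, v ≠ 0
  · obtain ⟨v, hv⟩ := hd
    have hsne : (Metric.sphere (0 : Fin d → ℝ) 1).Nonempty :=
      ⟨‖v‖⁻¹ • v, by simp [norm_smul, norm_ne_zero_iff.mpr hv, inv_mul_cancel₀]⟩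
    obtain ⟨v₀, hv₀s, hv₀min⟩ :=
      (isCompact_sphere (0 : Fin d → ℝ) 1).exists_isMinOn hsne hN.continuous.continuousOn
    have hv₀norm : ‖v₀‖ = 1 := by simpa using hv₀s
    have hv₀ne : v₀ ≠ 0 := by intro h; rw [h] at hv₀norm; simp at hv₀norm
    have hc : 0 < N v₀ :=
      lt_of_le_of_ne (hN.nonneg _) (fun h => hv₀ne ((hN.eq_zero_iff v₀).mp h.symm))
    refine ⟨N v₀, hc, fun z => ?_⟩
    by_cases hz : z = 0
    · simp [hz, hN.zero]
    · have hzn : (0:ℝ) < ‖z‖ := norm_pos_iff.mpr hz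
      have hmem : ‖z‖⁻¹ • z ∈ Metric.sphere (0 : Fin d → ℝ) 1 := by
        simp [norm_smul, abs_of_pos (inv_pos.mpr hzn), inv_mul_cancel₀ hzn.ne']
      have := hv₀min hmem
      have h2 : N v₀ ≤ N (‖z‖⁻¹ • z) := this
      rw [hN.smul, abs_of_pos (inv_pos.mpr hzn)] at h2
      have := mul_le_mul_of_nonneg_left h2 hzn.le
      rw [← mul_assoc, mul_inv_cancel₀ hzn.ne', one_mul] at this
      linarith [mul_comm (N v₀) ‖z‖]
  · push_neg at hd
    refine ⟨1, one_pos, fun z => ?_⟩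
    simp [hd z, hN.zero]

/- ## restStar lemmas -/

lemma zero_mem_RK (K : Finset (Fin d)) : (0 : Fin d → ℝ) ∈ RK K := fun _ _ => rfl

lemma restStar_set_nonempty (hN : IsNorm N) (K : Finset (Fin d)) (y : Fin d → ℝ) :
    {r | ∃ x ∈ RK K, N x ≤ 1 ∧ r = dotp x y}.Nonempty :=
  ⟨0, 0, zero_mem_RK K, by simp [hN.zero], (dotp_zero_left y).symm⟩

lemma restStar_bddAbove (hN : IsNorm N) (K : Finset (Fin d)) (y : Fin d → ℝ) :
    BddAbove {r | ∃ x ∈ RK K, N x ≤ 1 ∧ r = dotp x y} := by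
  obtain ⟨c, hc0, hc⟩ := hN.exists_lower
  refine ⟨c⁻¹ * ∑ i, |y i|, ?_⟩
  rintro r ⟨x, _, hx1, rfl⟩
  have hxn : ‖x‖ ≤ c⁻¹ := by
    have h1 := (hc x).trans hx1
    rw [show c⁻¹ = 1/c by ring, le_div_iff₀ hc0]
    linarith [mul_comm c ‖x‖]
  calc dotp x y ≤ ‖x‖ * ∑ i, |y i| := dotp_le x y
    _ ≤ c⁻¹ * ∑ i, |y i| := by
        apply mul_le_mul_of_nonneg_right hxn
        exact Finset.sum_nonneg fun i _ => abs_nonneg _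

lemma le_restStar (hN : IsNorm N) {K : Finset (Fin d)} {x : Fin d → ℝ} (y : Fin d → ℝ)
    (hxK : x ∈ RK K) (hx1 : N x ≤ 1) : dotp x y ≤ restStar N K y :=
  le_csSup (restStar_bddAbove hN K y) ⟨x, hxK, hx1, rfl⟩

lemma restStar_le (hN : IsNorm N) {K : Finset (Fin d)} {y : Fin d → ℝ} {B : ℝ}
    (h : ∀ x ∈ RK K, N x ≤ 1 → dotp x y ≤ B) : restStar N K y ≤ B := by
  apply csSup_le (restStar_set_nonempty hN K y)
  rintro r ⟨x, hxK, hx1, rfl⟩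
  exact h x hxK hx1

lemma restStar_nonneg (hN : IsNorm N) (K : Finset (Fin d)) (y : Fin d → ℝ) :
    0 ≤ restStar N K y :=
  (dotp_zero_left y) ▸ le_restStar hN y (zero_mem_RK K) (by simp [hN.zero])

lemma dotp_projK {K : Finset (Fin d)} {x : Fin d → ℝ} (hx : x ∈ RK K) (y : Fin d → ℝ) :
    dotp x (projK K y) = dotp x y := by
  apply Finset.sum_congr rfl
  intro i _
  by_cases hi : i ∈ K
  · simp [projK, hi]
  · simp [projK, hi, hx i hi]

lemma le_restStar_proj (hN : IsNorm N) {K : Finset (Fin d)} {x : Fin d → ℝ} (y : Fin d → ℝ)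
    (hxK : x ∈ RK K) (hx1 : N x ≤ 1) : dotp x y ≤ restStar N K (projK K y) := by
  rw [← dotp_projK hxK y]
  exact le_restStar hN _ hxK hx1

lemma restStar_proj_le (hN : IsNorm N) {K : Finset (Fin d)} {y : Fin d → ℝ} {B : ℝ}
    (h : ∀ x ∈ RK K, N x ≤ 1 → dotp x y ≤ B) : restStar N K (projK K y) ≤ B := by
  apply restStar_le hN
  intro x hxK hx1
  rw [dotp_projK hxK y]
  exact h x hxK hx1

lemma restStar_proj_mono (hN : IsNorm N) {K K' : Finset (Fin d)} (hKK : K ⊆ K') (y : Fin d → ℝ) :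
    restStar N K (projK K y) ≤ restStar N K' (projK K' y) := by
  apply restStar_proj_le hN
  intro x hxK hx1
  exact le_restStar_proj hN y (fun j hj => hxK j (fun hjK => hj (hKK hjK))) hx1

lemma restStar_zero_right (hN : IsNorm N) (K : Finset (Fin d)) : restStar N K 0 = 0 := by
  apply le_antisymm
  · exact restStar_le hN (fun x _ _ => by simp [dotp_zero_right])
  · exact restStar_nonneg hN K 0

/- ## dualCoord lemmas -/

lemma dualCoord_set_finite (k : ℕ) (y : Fin d → ℝ) :
    {r | ∃ K : Finset (Fin d), K.card ≤ k ∧ r = restStar N K (projK K y)}.Finite := by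
  apply (Set.finite_range (fun K : Finset (Fin d) => restStar N K (projK K y))).subset
  rintro r ⟨K, _, rfl⟩
  exact ⟨K, rfl⟩

lemma dualCoord_set_nonempty (k : ℕ) (y : Fin d → ℝ) :
    {r | ∃ K : Finset (Fin d), K.card ≤ k ∧ r = restStar N K (projK K y)}.Nonempty :=
  ⟨restStar N ∅ (projK ∅ y), ∅, by simp⟩

lemma le_dualCoord {k : ℕ} {K : Finset (Fin d)} (y : Fin d → ℝ) (hK : K.card ≤ k) :
    restStar N K (projK K y) ≤ dualCoord N k y :=
  le_csSup (dualCoord_set_finite k y).bddAbove ⟨K, hK, rfl⟩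

lemma dualCoord_le {k : ℕ} {y : Fin d → ℝ} {B : ℝ}
    (h : ∀ K : Finset (Fin d), K.card ≤ k → restStar N K (projK K y) ≤ B) :
    dualCoord N k y ≤ B := by
  apply csSup_le (dualCoord_set_nonempty k y)
  rintro r ⟨K, hK, rfl⟩
  exact h K hK

lemma dualCoord_exists_max (k : ℕ) (y : Fin d → ℝ) :
    ∃ K₀ : Finset (Fin d), K₀.card ≤ k ∧ dualCoord N k y = restStar N K₀ (projK K₀ y) :=
  (dualCoord_set_nonempty k y).csSup_mem (dualCoord_set_finite k y)

lemma restStar_empty (hN : IsNorm N) (v : Fin d → ℝ) : restStar N ∅ v = 0 := by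
  apply le_antisymm
  · apply restStar_le hN
    intro x hxK _
    have : x = 0 := funext fun j => hxK j (by simp)
    simp [this, dotp_zero_left]
  · exact restStar_nonneg hN ∅ v

lemma dualCoord_nonneg (hN : IsNorm N) (k : ℕ) (y : Fin d → ℝ) : 0 ≤ dualCoord N k y := by
  have := le_dualCoord (N := N) (k := k) (K := ∅) y (by simp)
  rwa [restStar_empty hN] at this

lemma dualCoord_zero_right (hN : IsNorm N) (k : ℕ) : dualCoord N k (0 : Fin d → ℝ) = 0 := by
  apply le_antisymm
  · apply dualCoord_le
    intro K _
    have : projK K (0 : Fin d → ℝ) = 0 := funext fun i => by simp [projK]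
    rw [this, restStar_zero_right hN]
  · exact dualCoord_nonneg hN k 0

lemma dualCoord_zero_k (hN : IsNorm N) (y : Fin d → ℝ) : dualCoord N 0 y = 0 := by
  apply le_antisymm
  · apply dualCoord_le
    intro K hK
    rw [Finset.card_eq_zero.mp (Nat.le_zero.mp hK), restStar_empty hN]
  · exact dualCoord_nonneg hN 0 y

lemma dotp_single (i : Fin d) (y : Fin d → ℝ) : dotp (Pi.single i 1) y = y i := by
  simp [dotp, Pi.single_apply, Finset.sum_ite_eq]

lemma N_single_pos (hN : IsNorm N) (i : Fin d) : 0 < N (Pi.single i 1) := by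
  rcases lt_or_eq_of_le (hN.nonneg (Pi.single i 1)) with h | h
  · exact h
  · exfalso
    have := (hN.eq_zero_iff _).mp h.symm
    have := congrFun this i
    simp at this

lemma single_lower (hN : IsNorm N) {k : ℕ} (hk : 1 ≤ k) (i : Fin d) (y : Fin d → ℝ) :
    |y i| / N (Pi.single i 1) ≤ dualCoord N k y := by
  have hNi := N_single_pos hN i
  have key : ∀ s : ℝ, |s| = 1 → s * y i / N (Pi.single i 1) ≤ dualCoord N k y := by
    intro s hs
    have hxK : (N (Pi.single i 1))⁻¹ • s • (Pi.single i 1 : Fin d → ℝ) ∈ RK {i} := by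
      intro j hj
      simp only [Finset.mem_singleton] at hj
      simp [Pi.single_apply, hj]
    have hx1 : N ((N (Pi.single i 1))⁻¹ • s • (Pi.single i 1 : Fin d → ℝ)) ≤ 1 := by
      rw [hN.smul, hN.smul, hs, one_mul, abs_of_pos (inv_pos.mpr hNi),
        inv_mul_cancel₀ hNi.ne']
    have h1 := le_restStar_proj hN y hxK hx1
    have h2 := le_dualCoord (N := N) (k := k) y (by simp [hk] : ({i} : Finset (Fin d)).card ≤ k)
    have h3 : dotp ((N (Pi.single i 1))⁻¹ • s • (Pi.single i 1 : Fin d → ℝ)) y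
        = s * y i / N (Pi.single i 1) := by
      rw [dotp_smul_left, dotp_smul_left, dotp_single]
      field_simp
    rw [h3] at h1
    linarith
  rcases abs_choice (y i) with h | h
  · have h1 := key 1 (by simp)
    rw [one_mul] at h1
    rw [h]; exact h1
  · have h1 := key (-1) (by simp)
    rw [neg_one_mul, neg_div] at h1
    rw [h]; rw [neg_div]; exact h1

lemma projK_smul (K : Finset (Fin d)) (c : ℝ) (y : Fin d → ℝ) :
    projK K (c • y) = c • projK K y := by
  funext i
  by_cases hi : i ∈ K <;> simp [projK, hi]

lemma restStar_smul_right_le (hN : IsNorm N) (K : Finset (Fin d)) (c : ℝ) (v : Fin d → ℝ) :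
    restStar N K (c • v) ≤ |c| * restStar N K v := by
  apply restStar_le hN
  intro x hxK hx1
  rcases eq_or_ne c 0 with rfl | hc
  · simp [dotp_zero_right, restStar_nonneg hN K v]
  · have habs : 0 < |c| := abs_pos.mpr hc
    have hsgn : |(c / abs c)| = 1 := by
      rw [abs_div, abs_abs, div_self (abs_ne_zero.mpr hc)]
    have hmem : (c / abs c) • x ∈ RK K := fun j hj => by simp [hxK j hj]
    have h1 : N ((c / abs c) • x) ≤ 1 := by rw [hN.smul, hsgn, one_mul]; exact hx1
    have h2 := le_restStar hN v hmem h1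
    rw [dotp_smul_left] at h2
    calc dotp x (c • v) = c * dotp x v := dotp_smul_right c x v
      _ = |c| * (c / abs c * dotp x v) := by field_simp
      _ ≤ |c| * restStar N K v := mul_le_mul_of_nonneg_left h2 habs.le

lemma restStar_smul_right (hN : IsNorm N) (K : Finset (Fin d)) (c : ℝ) (v : Fin d → ℝ) :
    restStar N K (c • v) = |c| * restStar N K v := by
  rcases eq_or_ne c 0 with rfl | hc
  · rw [zero_smul, restStar_zero_right hN, abs_zero, zero_mul]
  · apply le_antisymm (restStar_smul_right_le hN K c v)
    have h := restStar_smul_right_le hN K c⁻¹ (c • v)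
    rw [smul_smul, inv_mul_cancel₀ hc, one_smul] at h
    have habs : 0 < |c| := abs_pos.mpr hc
    have := mul_le_mul_of_nonneg_left h habs.le
    rw [← mul_assoc, abs_inv, mul_inv_cancel₀ habs.ne', one_mul] at this
    linarith


/- ## dualCoord homogeneity and positivity -/

lemma dualCoord_smul (hN : IsNorm N) (k : ℕ) (c : ℝ) (y : Fin d → ℝ) :
    dualCoord N k (c • y) = |c| * dualCoord N k y := by
  have key : ∀ c : ℝ, ∀ y : Fin d → ℝ, dualCoord N k (c • y) ≤ |c| * dualCoord N k y := by
    intro c y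
    apply dualCoord_le
    intro K hK
    rw [projK_smul, restStar_smul_right hN]
    exact mul_le_mul_of_nonneg_left (le_dualCoord y hK) (abs_nonneg c)
  rcases eq_or_ne c 0 with rfl | hc
  · rw [zero_smul, dualCoord_zero_right hN, abs_zero, zero_mul]
  · apply le_antisymm (key c y)
    have h := key c⁻¹ (c • y)
    rw [smul_smul, inv_mul_cancel₀ hc, one_smul] at h
    have habs : 0 < |c| := abs_pos.mpr hc
    have := mul_le_mul_of_nonneg_left h habs.le
    rw [← mul_assoc, abs_inv, mul_inv_cancel₀ habs.ne', one_mul] at this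
    linarith

lemma abs_le_dualCoord_mul (hN : IsNorm N) {k : ℕ} (hk : 1 ≤ k) (i : Fin d) (y : Fin d → ℝ) :
    |y i| ≤ dualCoord N k y * N (Pi.single i 1) := by
  have h := single_lower hN hk i y
  have hNi := N_single_pos hN i
  rw [div_le_iff₀ hNi] at h
  exact h

lemma dualCoord_eq_zero_imp (hN : IsNorm N) {k : ℕ} (hk : 1 ≤ k) {y : Fin d → ℝ}
    (h : dualCoord N k y = 0) : y = 0 := by
  funext i
  have := abs_le_dualCoord_mul hN hk i y
  rw [h, zero_mul] at this
  exact abs_eq_zero.mp (le_antisymm this (abs_nonneg _))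

lemma dualCoord_single_pos (hN : IsNorm N) {k : ℕ} (hk : 1 ≤ k) (i : Fin d) :
    0 < dualCoord N k (Pi.single i 1) := by
  rcases lt_or_eq_of_le (dualCoord_nonneg hN k (Pi.single i 1)) with h | h
  · exact h
  · exfalso
    have := dualCoord_eq_zero_imp hN hk h.symm
    have := congrFun this i
    simp at this

/- ## coordNorm lemmas -/

lemma coordNorm_set_nonempty (hN : IsNorm N) (k : ℕ) (x : Fin d → ℝ) :
    {r | ∃ y : Fin d → ℝ, dualCoord N k y ≤ 1 ∧ r = dotp x y}.Nonempty :=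
  ⟨0, 0, by simp [dualCoord_zero_right hN], (dotp_zero_right x).symm⟩

lemma coordNorm_set_bddAbove (hN : IsNorm N) {k : ℕ} (hk : 1 ≤ k) (x : Fin d → ℝ) :
    BddAbove {r | ∃ y : Fin d → ℝ, dualCoord N k y ≤ 1 ∧ r = dotp x y} := by
  refine ⟨∑ i, |x i| * N (Pi.single i 1), ?_⟩
  rintro r ⟨y, hy1, rfl⟩
  calc dotp x y ≤ ∑ i, |x i * y i| := Finset.sum_le_sum fun i _ => le_abs_self _
    _ ≤ ∑ i, |x i| * N (Pi.single i 1) := by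
        apply Finset.sum_le_sum
        intro i _
        rw [abs_mul]
        apply mul_le_mul_of_nonneg_left _ (abs_nonneg _)
        calc |y i| ≤ dualCoord N k y * N (Pi.single i 1) := abs_le_dualCoord_mul hN hk i y
          _ ≤ N (Pi.single i 1) := by
              nlinarith [N_single_pos hN i, dualCoord_nonneg hN k y]

lemma le_coordNorm (hN : IsNorm N) {k : ℕ} (hk : 1 ≤ k) {x y : Fin d → ℝ}
    (hy : dualCoord N k y ≤ 1) : dotp x y ≤ coordNorm N k x :=
  le_csSup (coordNorm_set_bddAbove hN hk x) ⟨y, hy, rfl⟩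

lemma coordNorm_le (hN : IsNorm N) {k : ℕ} {x : Fin d → ℝ} {B : ℝ}
    (h : ∀ y : Fin d → ℝ, dualCoord N k y ≤ 1 → dotp x y ≤ B) : coordNorm N k x ≤ B := by
  apply csSup_le (coordNorm_set_nonempty hN k x)
  rintro r ⟨y, hy, rfl⟩
  exact h y hy

lemma coordNorm_nonneg (hN : IsNorm N) {k : ℕ} (hk : 1 ≤ k) (x : Fin d → ℝ) :
    0 ≤ coordNorm N k x :=
  (dotp_zero_right x) ▸ le_coordNorm hN hk (by simp [dualCoord_zero_right hN])

lemma coordNorm_zero (hN : IsNorm N) (k : ℕ) : coordNorm N k (0 : Fin d → ℝ) = 0 := by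
  apply le_antisymm
  · exact coordNorm_le hN fun y _ => by simp [dotp_zero_left]
  · rcases Nat.eq_zero_or_pos k with rfl | hk
    · have hmem : (0:ℝ) ∈ {r | ∃ y : Fin d → ℝ, dualCoord N 0 y ≤ 1 ∧ r = dotp 0 y} :=
        ⟨0, by simp [dualCoord_zero_right hN], (dotp_zero_left 0).symm⟩
      refine le_csSup ⟨0, ?_⟩ hmem
      rintro r ⟨y, _, rfl⟩
      simp [dotp_zero_left]
    · exact coordNorm_nonneg hN hk 0

lemma coordNorm_add_le (hN : IsNorm N) {k : ℕ} (hk : 1 ≤ k) (a b : Fin d → ℝ) :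
    coordNorm N k (a + b) ≤ coordNorm N k a + coordNorm N k b := by
  apply coordNorm_le hN
  intro y hy
  rw [dotp_add_left]
  exact add_le_add (le_coordNorm hN hk hy) (le_coordNorm hN hk hy)

lemma coordNorm_smul (hN : IsNorm N) {k : ℕ} (hk : 1 ≤ k) {c : ℝ} (hc : 0 ≤ c)
    (z : Fin d → ℝ) : coordNorm N k (c • z) = c * coordNorm N k z := by
  have key : ∀ c : ℝ, 0 ≤ c → ∀ z : Fin d → ℝ,
      coordNorm N k (c • z) ≤ c * coordNorm N k z := by
    intro c hc z
    apply coordNorm_le hN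
    intro y hy
    rw [dotp_smul_left]
    exact mul_le_mul_of_nonneg_left (le_coordNorm hN hk hy) hc
  rcases eq_or_lt_of_le hc with rfl | hc'
  · rw [zero_smul, coordNorm_zero hN, zero_mul]
  · apply le_antisymm (key c hc z)
    have h := key c⁻¹ (inv_pos.mpr hc').le (c • z)
    rw [smul_smul, inv_mul_cancel₀ hc'.ne', one_smul] at h
    have := mul_le_mul_of_nonneg_left h hc
    rw [← mul_assoc, mul_inv_cancel₀ hc'.ne', one_mul] at this
    linarith

lemma coordNorm_le_norm (hN : IsNorm N) {k : ℕ} (hk : 1 ≤ k) (z : Fin d → ℝ) :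
    coordNorm N k z ≤ ‖z‖ * ∑ i, N (Pi.single i 1 : _) := by
  apply coordNorm_le hN
  intro y hy
  calc dotp z y ≤ ∑ i, |z i * y i| := Finset.sum_le_sum fun i _ => le_abs_self _
    _ ≤ ∑ i, ‖z‖ * N (Pi.single i 1 : _) := by
        apply Finset.sum_le_sum
        intro i _
        rw [abs_mul]
        have h1 : |z i| ≤ ‖z‖ := norm_le_pi_norm z i
        have h2 : |y i| ≤ N (Pi.single i 1) := by
          calc |y i| ≤ dualCoord N k y * N (Pi.single i 1) := abs_le_dualCoord_mul hN hk i y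
            _ ≤ N (Pi.single i 1) := by nlinarith [N_single_pos hN i, dualCoord_nonneg hN k y]
        exact mul_le_mul h1 h2 (abs_nonneg _) (norm_nonneg z)
    _ = ‖z‖ * ∑ i, N (Pi.single i 1 : _) := by rw [Finset.mul_sum]

lemma coordNorm_neg (hN : IsNorm N) {k : ℕ} (hk : 1 ≤ k) (z : Fin d → ℝ) :
    coordNorm N k (-z) = coordNorm N k z := by
  have key : ∀ z : Fin d → ℝ, coordNorm N k (-z) ≤ coordNorm N k z := by
    intro z
    apply coordNorm_le hN
    intro y hy
    have hy' : dualCoord N k (-y) ≤ 1 := by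
      have := dualCoord_smul hN k (-1) y
      simp only [neg_smul, one_smul, abs_neg, abs_one, one_mul] at this
      rwa [this]
    have := le_coordNorm hN hk (x := z) hy'
    calc dotp (-z) y = dotp z (-y) := by simp [dotp, neg_mul, mul_neg]
      _ ≤ coordNorm N k z := this
  apply le_antisymm (key z)
  have := key (-z)
  rwa [neg_neg] at this

lemma coordNorm_continuous (hN : IsNorm N) {k : ℕ} (hk : 1 ≤ k) :
    Continuous (fun z => coordNorm N k z) := by
  set M := ∑ i, N (Pi.single i 1 : Fin d → ℝ) with hM
  have hM0 : 0 ≤ M := Finset.sum_nonneg fun i _ => hN.nonneg _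
  apply (LipschitzWith.of_dist_le_mul (K := ⟨M, hM0⟩) ?_).continuous
  intro a b
  rw [Real.dist_eq, dist_eq_norm]
  have hsub : ∀ u v : Fin d → ℝ, coordNorm N k u - coordNorm N k v ≤ M * ‖u - v‖ := by
    intro u v
    have h1 : coordNorm N k u ≤ coordNorm N k (u - v) + coordNorm N k v := by
      have := coordNorm_add_le hN hk (u - v) v
      simpa using this
    have h2 : coordNorm N k (u - v) ≤ ‖u - v‖ * M := coordNorm_le_norm hN hk _
    linarith [mul_comm ‖u - v‖ M]
  have h3 := hsub a b
  have h4 := hsub b a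
  rw [norm_sub_rev b a] at h4
  show |coordNorm N k a - coordNorm N k b| ≤ M * ‖a - b‖
  rw [abs_le]; constructor <;> linarith

lemma dotp_single_right (i : Fin d) (z : Fin d → ℝ) : dotp z (Pi.single i 1) = z i := by
  simp [dotp, Pi.single_apply, Finset.sum_ite_eq']

lemma abs_le_coordNorm_mul (hN : IsNorm N) {k : ℕ} (hk : 1 ≤ k) (i : Fin d) (z : Fin d → ℝ) :
    |z i| ≤ coordNorm N k z * dualCoord N k (Pi.single i 1) := by
  have hD := dualCoord_single_pos hN hk i
  have key : ∀ s : ℝ, |s| = 1 → s * z i ≤ coordNorm N k z * dualCoord N k (Pi.single i 1) := by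
    intro s hs
    have hy : dualCoord N k ((dualCoord N k (Pi.single i 1))⁻¹ • s • (Pi.single i 1 : Fin d → ℝ)) ≤ 1 := by
      rw [dualCoord_smul hN, dualCoord_smul hN, hs, one_mul,
        abs_of_pos (inv_pos.mpr hD), inv_mul_cancel₀ hD.ne']
    have h1 := le_coordNorm hN hk (x := z) hy
    have h2 : dotp z ((dualCoord N k (Pi.single i 1))⁻¹ • s • (Pi.single i 1 : Fin d → ℝ))
        = (dualCoord N k (Pi.single i 1))⁻¹ * (s * z i) := by
      rw [dotp_smul_right, dotp_smul_right, dotp_single_right]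
    rw [h2] at h1
    have := mul_le_mul_of_nonneg_left h1 hD.le
    rw [← mul_assoc, mul_inv_cancel₀ hD.ne', one_mul] at this
    linarith [mul_comm (coordNorm N k z) (dualCoord N k (Pi.single i 1))]
  rcases abs_choice (z i) with h | h
  · have h1 := key 1 (by simp); rw [one_mul] at h1; rw [h]; exact h1
  · have h1 := key (-1) (by simp); rw [neg_one_mul] at h1; rw [h]; exact h1

lemma dotp_le_coord_dual (hN : IsNorm N) {k : ℕ} (hk : 1 ≤ k) (z y : Fin d → ℝ) :
    dotp z y ≤ coordNorm N k z * dualCoord N k y := by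
  rcases eq_or_lt_of_le (dualCoord_nonneg hN k y) with h | h
  · have hy0 : y = 0 := dualCoord_eq_zero_imp hN hk h.symm
    rw [hy0, dotp_zero_right, dualCoord_zero_right hN, mul_zero]
  · have hy1 : dualCoord N k ((dualCoord N k y)⁻¹ • y) ≤ 1 := by
      rw [dualCoord_smul hN, abs_of_pos (inv_pos.mpr h), inv_mul_cancel₀ h.ne']
    have h1 := le_coordNorm hN hk (x := z) hy1
    rw [dotp_smul_right] at h1
    have := mul_le_mul_of_nonneg_left h1 h.le
    rw [← mul_assoc, mul_inv_cancel₀ h.ne', one_mul] at this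
    linarith [mul_comm (coordNorm N k z) (dualCoord N k y)]

lemma coordNorm_top_le (hN : IsNorm N) (z : Fin d → ℝ) : coordNorm N d z ≤ N z := by
  rcases eq_or_ne z 0 with rfl | hz
  · rw [coordNorm_zero hN, hN.zero]
  · apply coordNorm_le hN
    intro y hy
    have hNz : 0 < N z :=
      lt_of_le_of_ne (hN.nonneg z) fun h => hz ((hN.eq_zero_iff z).mp h.symm)
    have hmem : (N z)⁻¹ • z ∈ RK Finset.univ := fun j hj => absurd (Finset.mem_univ j) hj
    have h1 : N ((N z)⁻¹ • z) ≤ 1 := by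
      rw [hN.smul, abs_of_pos (inv_pos.mpr hNz), inv_mul_cancel₀ hNz.ne']
    have h2 := le_restStar_proj hN y hmem h1
    have h3 : restStar N Finset.univ (projK Finset.univ y) ≤ dualCoord N d y :=
      le_dualCoord y (by simp)
    rw [dotp_smul_left] at h2
    have h4 := (h2.trans h3).trans hy
    have h5 := mul_le_mul_of_nonneg_left h4 hNz.le
    rw [mul_one, ← mul_assoc, mul_inv_cancel₀ hNz.ne', one_mul] at h5
    exact h5

lemma exists_bipolar_witness (hN : IsNorm N) {k : ℕ} (hk : 1 ≤ k) (y : Fin d → ℝ)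
    {ε : ℝ} (hε : 0 < ε) :
    ∃ x' : Fin d → ℝ, coordNorm N k x' ≤ 1 ∧ dualCoord N k y - ε ≤ dotp x' y := by
  obtain ⟨K₀, hK₀card, hK₀⟩ := dualCoord_exists_max (N := N) k y
  have hlt : dualCoord N k y - ε < sSup {r | ∃ x ∈ RK K₀, N x ≤ 1 ∧ r = dotp x (projK K₀ y)} := by
    rw [← restStar, ← hK₀]; linarith
  obtain ⟨r, hr, hrlt⟩ := exists_lt_of_lt_csSup (restStar_set_nonempty hN K₀ (projK K₀ y)) hlt
  obtain ⟨x', hx'K, hx'1, rfl⟩ := hr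
  refine ⟨x', ?_, ?_⟩
  · apply coordNorm_le hN
    intro y' hy'
    calc dotp x' y' = dotp x' (projK K₀ y') := (dotp_projK hx'K y').symm
      _ ≤ restStar N K₀ (projK K₀ y') := le_restStar hN _ hx'K hx'1
      _ ≤ dualCoord N k y' := le_dualCoord y' hK₀card
      _ ≤ 1 := hy'
  · rw [dotp_projK hx'K y] at hrlt
    linarith
/- ## support lemmas -/

def suppF {d : ℕ} (x : Fin d → ℝ) : Finset (Fin d) := Finset.univ.filter (fun i => x i ≠ 0)

lemma ell0_eq_card (x : Fin d → ℝ) : ell0 x = (suppF x).card := by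
  rw [ell0, show Function.support x = ↑(suppF x) from ?_, Set.ncard_coe_finset]
  ext i
  simp [suppF, Function.mem_support]

lemma mem_RK_suppF (x : Fin d → ℝ) : x ∈ RK (suppF x) := by
  intro j hj
  simp only [suppF, Finset.mem_filter, Finset.mem_univ, true_and, not_not] at hj
  exact hj

lemma ell0_le (x : Fin d → ℝ) : ell0 x ≤ d := by
  rw [ell0_eq_card]
  calc (suppF x).card ≤ Finset.univ.card := Finset.card_le_univ _
    _ = d := by simp

lemma ell0_zero : ell0 (0 : Fin d → ℝ) = 0 := by
  simp [ell0, Function.support]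

/- ## EReal sup helper -/

lemma iSup_coe_eq {α : Type*} [Nonempty α] (g : α → ℝ) (r : ℝ)
    (h1 : ∀ a, g a ≤ r) (h2 : ∀ ε > 0, ∃ a, r - ε ≤ g a) :
    (⨆ a, ((g a : ℝ) : EReal)) = (r : EReal) := by
  apply le_antisymm
  · exact iSup_le fun a => EReal.coe_le_coe_iff.mpr (h1 a)
  · by_contra h
    push_neg at h
    obtain ⟨q, hq1, hq2⟩ := EReal.lt_iff_exists_real_btwn.mp h
    have hε : (0:ℝ) < r - q := sub_pos.mpr (EReal.coe_lt_coe_iff.mp hq2)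
    obtain ⟨a, ha⟩ := h2 (r - q) hε
    have h3 : ((g a : ℝ) : EReal) ≤ ⨆ b, ((g b : ℝ) : EReal) :=
      le_iSup (fun b => ((g b : ℝ) : EReal)) a
    have h4 : (q : EReal) ≤ ((g a : ℝ) : EReal) := by
      apply EReal.coe_le_coe_iff.mpr; linarith
    exact absurd ((h4.trans h3).trans_lt hq1) (lt_irrefl _)

/- ## the function F -/

def Fy {d : ℕ} (N : (Fin d → ℝ) → ℝ) (φ : ℕ → ℝ) (y : Fin d → ℝ) : ℝ :=
  (Finset.range (d+1)).sup' Finset.nonempty_range_add_one (fun l => dualCoord N l y - φ l)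

lemma le_Fy {φ : ℕ → ℝ} {l : ℕ} (hl : l ≤ d) (y : Fin d → ℝ) :
    dualCoord N l y - φ l ≤ Fy N φ y := by
  simp only [Fy]
  exact Finset.le_sup' (fun l => dualCoord N l y - φ l) (Finset.mem_range.mpr (Nat.lt_succ_of_le hl))

lemma Fy_nonneg (hN : IsNorm N) {φ : ℕ → ℝ} (hφ0 : φ 0 = 0) (y : Fin d → ℝ) :
    0 ≤ Fy N φ y := by
  have := le_Fy (N := N) (φ := φ) (Nat.zero_le d) y
  rwa [dualCoord_zero_k hN, hφ0, zero_sub, neg_zero] at this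

lemma Fy_exists (φ : ℕ → ℝ) (y : Fin d → ℝ) :
    ∃ l ≤ d, Fy N φ y = dualCoord N l y - φ l := by
  simp only [Fy]
  obtain ⟨l, hl, h⟩ := Finset.exists_mem_eq_sup' (Finset.nonempty_range_add_one)
    (fun l => dualCoord N l y - φ l)
  exact ⟨l, Nat.lt_succ_iff.mp (Finset.mem_range.mp hl), h⟩

/- ## continuity of dotp -/

lemma dotp_continuous_left (y : Fin d → ℝ) : Continuous (fun v => dotp v y) := by
  apply continuous_finset_sum
  intro i _
  exact (continuous_apply i).mul continuous_const

/- ## capraConj computation -/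

lemma capra_le_dualCoord (hN : IsNorm N) {x : Fin d → ℝ} (hx : x ≠ 0) (y : Fin d → ℝ) :
    capra N x y ≤ dualCoord N (ell0 x) y := by
  rw [capra, if_neg hx]
  have hNx : 0 < N x := lt_of_le_of_ne (hN.nonneg x) fun h => hx ((hN.eq_zero_iff x).mp h.symm)
  have hmem : (N x)⁻¹ • x ∈ RK (suppF x) := fun j hj => by
    simp [mem_RK_suppF x j hj]
  have h1 : N ((N x)⁻¹ • x) ≤ 1 := by
    rw [hN.smul, abs_of_pos (inv_pos.mpr hNx), inv_mul_cancel₀ hNx.ne']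
  have h2 := le_restStar_proj hN y hmem h1
  have h3 : restStar N (suppF x) (projK (suppF x) y) ≤ dualCoord N (ell0 x) y :=
    le_dualCoord y (le_of_eq (ell0_eq_card x).symm)
  rw [dotp_smul_left] at h2
  have h4 := h2.trans h3
  rw [div_eq_inv_mul]
  exact h4

lemma capraConj_eq (hN : IsNorm N) {φ : ℕ → ℝ} (hφnn : ∀ l ≤ d, 0 ≤ φ l) (hφ0 : φ 0 = 0)
    (y : Fin d → ℝ) :
    capraConj N (fun z => ((φ (ell0 z) : ℝ) : EReal)) y = ((Fy N φ y : ℝ) : EReal) := by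
  rw [capraConj]
  have hterm : ∀ x : Fin d → ℝ, ((capra N x y : ℝ) : EReal) + (-((φ (ell0 x) : ℝ) : EReal))
      = (((capra N x y - φ (ell0 x) : ℝ)) : EReal) := by
    intro x
    rw [sub_eq_add_neg, EReal.coe_add, EReal.coe_neg]
  simp_rw [hterm]
  apply iSup_coe_eq
  · -- upper bound
    intro x
    rcases eq_or_ne x 0 with rfl | hx
    · rw [capra, if_pos rfl, ell0_zero, hφ0, sub_zero]
      exact Fy_nonneg hN hφ0 y
    · have h1 := capra_le_dualCoord hN hx y
      have h2 := le_Fy (N := N) (φ := φ) (ell0_le x) y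
      linarith
  · -- approximate attainment
    intro ε hε
    obtain ⟨l, hld, hl⟩ := Fy_exists (N := N) φ y
    by_cases hF : Fy N φ y ≤ 0
    · refine ⟨0, ?_⟩
      rw [capra, if_pos rfl, ell0_zero, hφ0, sub_zero]
      have := Fy_nonneg hN hφ0 y
      linarith
    · push_neg at hF
      -- D_l y > φ l ≥ 0, so l ≥ 1
      have hA : φ l < dualCoord N l y := by linarith
      have hφl : 0 ≤ φ l := hφnn l hld
      have hApos : 0 < dualCoord N l y := lt_of_le_of_lt hφl hA
      have hl1 : 1 ≤ l := by
        by_contra hl0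
        push_neg at hl0
        interval_cases l
        rw [dualCoord_zero_k hN] at hApos
        exact absurd hApos (lt_irrefl 0)
      set A : ℝ := dualCoord N l y with hAdef
      -- optimal K₀, enlarge to card l
      obtain ⟨K₀, hK₀card, hK₀⟩ := dualCoord_exists_max (N := N) l y
      obtain ⟨K₁, hK₀K₁, _, hK₁card⟩ := Finset.exists_subsuperset_card_eq
        (Finset.subset_univ K₀) hK₀card (by simp [hld])
      have hrest : restStar N K₁ (projK K₁ y) = A := by
        apply le_antisymm
        · exact le_dualCoord y (le_of_eq hK₁card)
        · rw [hAdef, hK₀]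
          exact restStar_proj_mono hN hK₀K₁ y
      set δε : ℝ := min (ε/2) (A/2) with hδε
      have hδεpos : 0 < δε := lt_min (by linarith) (by linarith)
      have hlt : A - δε < sSup {r | ∃ x ∈ RK K₁, N x ≤ 1 ∧ r = dotp x (projK K₁ y)} := by
        rw [← restStar, hrest]; linarith
      obtain ⟨r, hrmem, hrlt⟩ :=
        exists_lt_of_lt_csSup (restStar_set_nonempty hN K₁ (projK K₁ y)) hlt
      obtain ⟨x', hx'K, hx'1, rfl⟩ := hrmem
      rw [dotp_projK hx'K y] at hrlt
      have hdpos : 0 < dotp x' y := by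
        have : A/2 ≤ A - δε := by
          have : δε ≤ A/2 := min_le_right _ _
          linarith
        linarith
      have hx'ne : x' ≠ 0 := fun h => by rw [h, dotp_zero_left] at hdpos; exact lt_irrefl 0 hdpos
      have hNx' : 0 < N x' :=
        lt_of_le_of_ne (hN.nonneg x') fun h => hx'ne ((hN.eq_zero_iff x').mp h.symm)
      -- the perturbation direction
      set u : Fin d → ℝ := fun i => if i ∈ K₁ ∧ x' i = 0 then 1 else 0 with hu
      -- continuity argument
      set q : ℝ → ℝ := fun δ => dotp (x' + δ • u) y / N (x' + δ • u) with hq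
      have hq0 : q 0 = dotp x' y / N x' := by simp [hq]
      have hline : Continuous (fun δ : ℝ => x' + δ • u) :=
        continuous_const.add (continuous_id.smul continuous_const)
      have hqcont : ContinuousAt q 0 := by
        apply ContinuousAt.div
        · exact ((dotp_continuous_left y).comp hline).continuousAt
        · exact (hN.continuous.comp hline).continuousAt
        · simpa using hNx'.ne'
      have hq0big : A - ε < q 0 := by
        rw [hq0]
        have h5 : dotp x' y ≤ dotp x' y / N x' := by
          rw [le_div_iff₀ hNx']
          nlinarith
        have h6 : δε ≤ ε/2 := min_le_left _ _
        nlinarith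
      have hev : ∀ᶠ δ in nhds (0:ℝ), A - ε < q δ :=
        hqcont.eventually_mem (isOpen_Ioi.mem_nhds (by rw [Set.mem_Ioi]; exact hq0big))
      obtain ⟨δ₀, hδ₀pos, hball⟩ := Metric.eventually_nhds_iff.mp hev
      set δ : ℝ := δ₀ / 2 with hδdef
      have hδpos : 0 < δ := by linarith
      have hqδ : A - ε < q δ := by
        apply hball
        rw [Real.dist_eq, sub_zero, abs_of_pos hδpos]
        linarith
      -- the witness
      refine ⟨x' + δ • u, ?_⟩
      have hsupp : suppF (x' + δ • u) = K₁ := by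
        ext i
        simp only [suppF, Finset.mem_filter, Finset.mem_univ, true_and]
        constructor
        · intro hi
          by_contra hiK
          have hx'i : x' i = 0 := hx'K i hiK
          have hui : u i = 0 := by simp [hu, hiK]
          simp [Pi.add_apply, Pi.smul_apply, hx'i, hui] at hi
        · intro hi
          by_cases hx'i : x' i = 0
          · have hui : u i = 1 := by simp [hu, hi, hx'i]
            simp [Pi.add_apply, Pi.smul_apply, hx'i, hui, hδpos.ne']
          · have hui : u i = 0 := by simp [hu, hx'i]
            simp [Pi.add_apply, Pi.smul_apply, hui, hx'i]
      have hell : ell0 (x' + δ • u) = l := by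
        rw [ell0_eq_card, hsupp, hK₁card]
      have hne : x' + δ • u ≠ 0 := by
        intro h
        have : suppF (x' + δ • u) = ∅ := by
          rw [h]
          ext i; simp [suppF]
        rw [hsupp] at this
        rw [this] at hK₁card
        simp at hK₁card
        omega
      rw [capra, if_neg hne, hell]
      have : A - ε ≤ dotp (x' + δ • u) y / N (x' + δ • u) := le_of_lt hqδ
      rw [hl]
      linarith
/- ## reindexing -/

lemma sum_Icc_fin {M : Type*} [AddCommMonoid M] (g : ℕ → M) :
    ∑ l ∈ Finset.Icc 1 d, g l = ∑ l : Fin d, g (l.val + 1) := by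
  rw [← Finset.Ico_add_one_right_eq_Icc, Finset.sum_Ico_eq_sum_range]
  simp only [Nat.add_sub_cancel]
  rw [Fin.sum_univ_eq_sum_range (fun i => g (i + 1)) d]
  exact Finset.sum_congr rfl fun i _ => by rw [add_comm]

/- ## the minimization problem -/

def sumC {d : ℕ} (N : (Fin d → ℝ) → ℝ) (w : Fin d → Fin d → ℝ) : ℝ :=
  ∑ l, coordNorm N (l.val + 1) (w l)

def objW {d : ℕ} (N : (Fin d → ℝ) → ℝ) (φ : ℕ → ℝ) (w : Fin d → Fin d → ℝ) : ℝ :=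
  ∑ l, φ (l.val + 1) * coordNorm N (l.val + 1) (w l)

def sumW {d : ℕ} (w : Fin d → Fin d → ℝ) : Fin d → ℝ := ∑ l, w l

lemma sumC_continuous (hN : IsNorm N) : Continuous (sumC N) := by
  apply continuous_finset_sum
  intro l _
  exact (coordNorm_continuous hN (Nat.succ_le_succ (Nat.zero_le _))).comp (continuous_apply l)

lemma objW_continuous (hN : IsNorm N) (φ : ℕ → ℝ) : Continuous (objW N φ) := by
  apply continuous_finset_sum
  intro l _
  exact continuous_const.mul
    (((coordNorm_continuous hN (Nat.succ_le_succ (Nat.zero_le _)))).comp (continuous_apply l))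

lemma sumW_continuous : Continuous (sumW (d := d)) := by
  apply continuous_finset_sum
  intro l _
  exact continuous_apply l

lemma sumC_nonneg (hN : IsNorm N) (w : Fin d → Fin d → ℝ) : 0 ≤ sumC N w :=
  Finset.sum_nonneg fun l _ => coordNorm_nonneg hN (Nat.succ_le_succ (Nat.zero_le _)) _

lemma coordNorm_le_sumC (hN : IsNorm N) (w : Fin d → Fin d → ℝ) (l : Fin d) :
    coordNorm N (l.val + 1) (w l) ≤ sumC N w :=
  Finset.single_le_sum
    (fun j _ => coordNorm_nonneg hN (Nat.succ_le_succ (Nat.zero_le _)) (w j))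
    (Finset.mem_univ l)

def Wfeas {d : ℕ} (N : (Fin d → ℝ) → ℝ) (t : ℝ) (x : Fin d → ℝ) :
    Set (Fin d → Fin d → ℝ) :=
  {w | sumC N w ≤ t ∧ sumW w = x}

lemma Wfeas_closed (hN : IsNorm N) (t : ℝ) (x : Fin d → ℝ) : IsClosed (Wfeas N t x) := by
  have h1 : IsClosed {w : Fin d → Fin d → ℝ | sumC N w ≤ t} :=
    isClosed_le (sumC_continuous hN) continuous_const
  have h2 : IsClosed {w : Fin d → Fin d → ℝ | sumW w = x} :=
    isClosed_eq sumW_continuous continuous_const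
  exact h1.inter h2

lemma Wfeas_compact (hN : IsNorm N) {t : ℝ} (ht : 0 ≤ t) (x : Fin d → ℝ) :
    IsCompact (Wfeas N t x) := by
  apply Metric.isCompact_of_isClosed_isBounded (Wfeas_closed hN t x)
  set B : ℝ := ∑ l : Fin d, ∑ i, dualCoord N (l.val + 1) (Pi.single i 1) with hB
  have hB0 : 0 ≤ B :=
    Finset.sum_nonneg fun l _ => Finset.sum_nonneg fun i _ =>
      dualCoord_nonneg hN _ _
  apply Metric.isBounded_closedBall (x := (0 : Fin d → Fin d → ℝ)) (r := t * B) |>.subset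
  intro w hw
  simp only [Metric.mem_closedBall, dist_zero_right]
  rw [pi_norm_le_iff_of_nonneg (by positivity)]
  intro l
  rw [pi_norm_le_iff_of_nonneg (by positivity)]
  intro i
  have h1 : coordNorm N (l.val + 1) (w l) ≤ t := (coordNorm_le_sumC hN w l).trans hw.1
  have h2 := abs_le_coordNorm_mul hN (k := l.val + 1) (Nat.succ_le_succ (Nat.zero_le _)) i (w l)
  have h3 : dualCoord N (l.val + 1) (Pi.single i 1) ≤ B := by
    rw [hB]
    calc dualCoord N (l.val + 1) (Pi.single i 1)
        ≤ ∑ i', dualCoord N (l.val + 1) (Pi.single i' 1) :=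
          Finset.single_le_sum
            (f := fun i' => dualCoord N (l.val + 1) (Pi.single i' 1))
            (fun i' _ => dualCoord_nonneg hN _ _) (Finset.mem_univ i)
      _ ≤ B := Finset.single_le_sum
          (f := fun l' : Fin d => ∑ i', dualCoord N (l'.val + 1) (Pi.single i' 1))
          (fun l' _ => Finset.sum_nonneg fun i' _ => dualCoord_nonneg hN _ _)
          (Finset.mem_univ l)
  calc ‖w l i‖ = |w l i| := rfl
    _ ≤ coordNorm N (l.val + 1) (w l) * dualCoord N (l.val + 1) (Pi.single i 1) := h2
    _ ≤ t * B := by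
        apply mul_le_mul h1 h3 (dualCoord_nonneg hN _ _)
        exact ht

lemma Wfeas_nonempty (hN : IsNorm N) {t : ℝ} (hd : 0 < d) {x : Fin d → ℝ} (hxt : N x ≤ t) :
    (Wfeas N t x).Nonempty := by
  set l₀ : Fin d := ⟨d - 1, by omega⟩ with hl₀
  refine ⟨fun l => if l = l₀ then x else 0, ?_, ?_⟩
  · have hsum : sumC N (fun l => if l = l₀ then x else 0)
        = coordNorm N (l₀.val + 1) x := by
      rw [sumC]
      have hcongr : ∀ b : Fin d, coordNorm N (b.val + 1) (if b = l₀ then x else 0)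
          = if b = l₀ then coordNorm N (b.val + 1) x else 0 := fun b => by
        by_cases hb : b = l₀ <;> simp [hb, coordNorm_zero hN]
      rw [Finset.sum_congr rfl (fun b _ => hcongr b),
        Finset.sum_ite_eq' Finset.univ l₀ (fun b => coordNorm N (b.val + 1) x)]
      simp
    rw [hsum]
    have : l₀.val + 1 = d := by simp [hl₀]; omega
    rw [this]
    exact (coordNorm_top_le hN x).trans hxt
  · rw [sumW]
    rw [Finset.sum_ite_eq' Finset.univ l₀ (fun _ => x)]
    simp
/- ## IsLeast of the minimization problem -/

lemma objW_nonneg (hN : IsNorm N) {φ : ℕ → ℝ} (hφnn : ∀ l ≤ d, 0 ≤ φ l)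
    (w : Fin d → Fin d → ℝ) : 0 ≤ objW N φ w :=
  Finset.sum_nonneg fun l _ => mul_nonneg (hφnn _ (by omega))
    (coordNorm_nonneg hN (Nat.succ_le_succ (Nat.zero_le _)) _)

lemma isLeast_min (hN : IsNorm N) (hd : 0 < d) {φ : ℕ → ℝ} (x : Fin d → ℝ) :
    ∃ w₀ ∈ Wfeas N (N x) x,
      (∀ w ∈ Wfeas N (N x) x, objW N φ w₀ ≤ objW N φ w) ∧
      IsLeast
        {r : ℝ | ∃ z : ℕ → (Fin d → ℝ),
          (∑ l ∈ Finset.Icc 1 d, coordNorm N l (z l)) ≤ N x ∧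
          (∑ l ∈ Finset.Icc 1 d, z l) = x ∧
          r = ∑ l ∈ Finset.Icc 1 d, φ l * coordNorm N l (z l)} (objW N φ w₀) := by
  obtain ⟨w₀, hw₀mem, hw₀min⟩ := (Wfeas_compact hN (hN.nonneg x) x).exists_isMinOn
    (Wfeas_nonempty hN hd (le_refl (N x))) (objW_continuous hN φ).continuousOn
  have hmin : ∀ w ∈ Wfeas N (N x) x, objW N φ w₀ ≤ objW N φ w := fun w hw => hw₀min hw
  refine ⟨w₀, hw₀mem, hmin, ?_, ?_⟩
  · -- membership
    set z : ℕ → (Fin d → ℝ) :=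
      fun l => if h : 1 ≤ l ∧ l ≤ d then w₀ ⟨l - 1, by omega⟩ else 0 with hz
    have hzl : ∀ l : Fin d, z (l.val + 1) = w₀ l := by
      intro l
      have h : 1 ≤ l.val + 1 ∧ l.val + 1 ≤ d := ⟨by omega, by omega⟩
      show (if h : 1 ≤ l.val + 1 ∧ l.val + 1 ≤ d then w₀ ⟨l.val + 1 - 1, by omega⟩ else 0) = w₀ l
      rw [dif_pos h]
      exact congrArg w₀ (Fin.ext (by simp))
    refine ⟨z, ?_, ?_, ?_⟩
    · rw [sum_Icc_fin (fun l => coordNorm N l (z l))]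
      calc ∑ l : Fin d, coordNorm N (l.val + 1) (z (l.val + 1))
          = sumC N w₀ := by
            rw [sumC]; exact Finset.sum_congr rfl fun l _ => by rw [hzl l]
        _ ≤ N x := hw₀mem.1
    · rw [sum_Icc_fin (fun l => z l)]
      calc ∑ l : Fin d, z (l.val + 1) = sumW w₀ := by
            rw [sumW]; exact Finset.sum_congr rfl fun l _ => hzl l
        _ = x := hw₀mem.2
    · rw [sum_Icc_fin (fun l => φ l * coordNorm N l (z l))]
      rw [objW]
      exact (Finset.sum_congr rfl fun l _ => by rw [hzl l]).symm
  · -- lower bound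
    rintro r ⟨z, hz1, hz2, rfl⟩
    set w : Fin d → Fin d → ℝ := fun l => z (l.val + 1) with hw
    have hwmem : w ∈ Wfeas N (N x) x := by
      constructor
      · rw [show sumC N w = ∑ l ∈ Finset.Icc 1 d, coordNorm N l (z l) from ?_]
        · exact hz1
        · rw [sum_Icc_fin (fun l => coordNorm N l (z l))]; rfl
      · rw [show sumW w = ∑ l ∈ Finset.Icc 1 d, z l from ?_]
        · exact hz2
        · rw [sum_Icc_fin (fun l => z l)]; rfl
    have := hmin w hwmem
    calc objW N φ w₀ ≤ objW N φ w := this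
      _ = ∑ l ∈ Finset.Icc 1 d, φ l * coordNorm N l (z l) := by
          rw [sum_Icc_fin (fun l => φ l * coordNorm N l (z l))]; rfl
/- ## easy inequality -/

lemma dotp_sum_left' {ι : Type*} (s : Finset ι) (f : ι → Fin d → ℝ) (y : Fin d → ℝ) :
    dotp (∑ l ∈ s, f l) y = ∑ l ∈ s, dotp (f l) y := by
  classical
  induction s using Finset.induction with
  | empty => simp [dotp]
  | @insert a s h ih => rw [Finset.sum_insert h, Finset.sum_insert h, dotp_add_left, ih]

lemma easy_bound (hN : IsNorm N) {φ : ℕ → ℝ} (hφ0 : φ 0 = 0)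
    {x : Fin d → ℝ} {w₀ : Fin d → Fin d → ℝ} (hw₀ : w₀ ∈ Wfeas N (N x) x) (y : Fin d → ℝ) :
    dotp x y ≤ N x * Fy N φ y + objW N φ w₀ := by
  have hF0 : 0 ≤ Fy N φ y := Fy_nonneg hN hφ0 y
  calc dotp x y = dotp (sumW w₀) y := by rw [hw₀.2]
    _ = ∑ l, dotp (w₀ l) y := by rw [sumW, dotp_sum_left']
    _ ≤ ∑ l : Fin d, coordNorm N (l.val + 1) (w₀ l) * (Fy N φ y + φ (l.val + 1)) := by
        apply Finset.sum_le_sum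
        intro l _
        have h1 := dotp_le_coord_dual hN (k := l.val + 1) (Nat.succ_le_succ (Nat.zero_le _))
          (w₀ l) y
        have h2 : dualCoord N (l.val + 1) y ≤ Fy N φ y + φ (l.val + 1) := by
          have := le_Fy (N := N) (φ := φ) (l := l.val + 1) (by omega) y
          linarith
        have h3 : 0 ≤ coordNorm N (l.val + 1) (w₀ l) :=
          coordNorm_nonneg hN (Nat.succ_le_succ (Nat.zero_le _)) _
        calc dotp (w₀ l) y ≤ coordNorm N (l.val + 1) (w₀ l) * dualCoord N (l.val + 1) y := h1
          _ ≤ coordNorm N (l.val + 1) (w₀ l) * (Fy N φ y + φ (l.val + 1)) :=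
              mul_le_mul_of_nonneg_left h2 h3
    _ = Fy N φ y * sumC N w₀ + objW N φ w₀ := by
        rw [sumC, objW, Finset.mul_sum, ← Finset.sum_add_distrib]
        apply Finset.sum_congr rfl
        intro l _
        ring
    _ ≤ N x * Fy N φ y + objW N φ w₀ := by
        have := mul_le_mul_of_nonneg_left hw₀.1 hF0
        linarith [mul_comm (Fy N φ y) (N x)]

/- ## the separation argument -/

lemma sumC_zero (hN : IsNorm N) : sumC N (0 : Fin d → Fin d → ℝ) = 0 := by
  rw [sumC]
  apply Finset.sum_eq_zero
  intro l _
  exact coordNorm_zero hN _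

lemma objW_zero (hN : IsNorm N) (φ : ℕ → ℝ) : objW N φ (0 : Fin d → Fin d → ℝ) = 0 := by
  rw [objW]
  apply Finset.sum_eq_zero
  intro l _
  rw [show (0 : Fin d → Fin d → ℝ) l = 0 from rfl, coordNorm_zero hN, mul_zero]

lemma sumW_zero : sumW (0 : Fin d → Fin d → ℝ) = 0 := by
  rw [sumW]; exact Finset.sum_eq_zero fun l _ => rfl

lemma norm_le_of_sumC (hN : IsNorm N) {t : ℝ} (ht : 0 ≤ t) {w : Fin d → Fin d → ℝ}
    (hw : sumC N w ≤ t) :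
    ‖w‖ ≤ t * (∑ l : Fin d, ∑ i, dualCoord N (l.val + 1) (Pi.single i 1)) := by
  set B : ℝ := ∑ l : Fin d, ∑ i, dualCoord N (l.val + 1) (Pi.single i 1) with hB
  have hB0 : 0 ≤ B :=
    Finset.sum_nonneg fun l _ => Finset.sum_nonneg fun i _ => dualCoord_nonneg hN _ _
  rw [pi_norm_le_iff_of_nonneg (by positivity)]
  intro l
  rw [pi_norm_le_iff_of_nonneg (by positivity)]
  intro i
  have h1 : coordNorm N (l.val + 1) (w l) ≤ t := (coordNorm_le_sumC hN w l).trans hw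
  have h2 := abs_le_coordNorm_mul hN (k := l.val + 1) (Nat.succ_le_succ (Nat.zero_le _)) i (w l)
  have h3 : dualCoord N (l.val + 1) (Pi.single i 1) ≤ B := by
    rw [hB]
    calc dualCoord N (l.val + 1) (Pi.single i 1)
        ≤ ∑ i', dualCoord N (l.val + 1) (Pi.single i' 1) :=
          Finset.single_le_sum
            (f := fun i' => dualCoord N (l.val + 1) (Pi.single i' 1))
            (fun i' _ => dualCoord_nonneg hN _ _) (Finset.mem_univ i)
      _ ≤ B := Finset.single_le_sum
          (f := fun l' : Fin d => ∑ i', dualCoord N (l'.val + 1) (Pi.single i' 1))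
          (fun l' _ => Finset.sum_nonneg fun i' _ => dualCoord_nonneg hN _ _)
          (Finset.mem_univ l)
  calc ‖w l i‖ = |w l i| := rfl
    _ ≤ coordNorm N (l.val + 1) (w l) * dualCoord N (l.val + 1) (Pi.single i 1) := h2
    _ ≤ t * B := mul_le_mul h1 h3 (dualCoord_nonneg hN _ _) ht

lemma separation_step (hN : IsNorm N) (hd : 0 < d) {φ : ℕ → ℝ} (hφnn : ∀ l ≤ d, 0 ≤ φ l)
    {x : Fin d → ℝ} (hx : x ≠ 0) {w₀ : Fin d → Fin d → ℝ}
    (hw₀ : w₀ ∈ Wfeas N (N x) x)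
    (hmin : ∀ w ∈ Wfeas N (N x) x, objW N φ w₀ ≤ objW N φ w)
    {ε : ℝ} (hε : 0 < ε) :
    ∃ y : Fin d → ℝ, objW N φ w₀ - ε ≤ dotp x y - N x * Fy N φ y := by
  set t : ℝ := N x with htdef
  have ht : 0 < t :=
    lt_of_le_of_ne (hN.nonneg x) fun h => hx ((hN.eq_zero_iff x).mp h.symm)
  set m : ℝ := objW N φ w₀ with hmdef
  have hm0 : 0 ≤ m := objW_nonneg hN hφnn w₀
  set P₀ : ℝ := ∑ l : Fin d, φ (l.val + 1) with hP₀def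
  have hP₀0 : 0 ≤ P₀ := Finset.sum_nonneg fun l _ => hφnn _ (by omega)
  set M : ℝ := m + t * P₀ + 1 with hMdef
  have hmM : m ≤ M := by nlinarith
  -- the truncated epigraph
  set src : Set ((Fin d → Fin d → ℝ) × ℝ) :=
    {p | sumC N p.1 ≤ t ∧ objW N φ p.1 ≤ p.2 ∧ p.2 ≤ M} with hsrcdef
  set epiT : Set ((Fin d → ℝ) × ℝ) :=
    (fun p : (Fin d → Fin d → ℝ) × ℝ => (sumW p.1, p.2)) '' src with hepidef
  -- compactness
  have hsrc_closed : IsClosed src := by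
    apply IsClosed.inter
    · exact isClosed_le ((sumC_continuous hN).comp continuous_fst) continuous_const
    · apply IsClosed.inter
      · exact isClosed_le ((objW_continuous hN φ).comp continuous_fst) continuous_snd
      · exact isClosed_le continuous_snd continuous_const
  have hsrc_bdd : Bornology.IsBounded src := by
    apply (Bornology.IsBounded.prod
      (Metric.isBounded_closedBall (x := (0 : Fin d → Fin d → ℝ))
        (r := t * (∑ l : Fin d, ∑ i, dualCoord N (l.val + 1) (Pi.single i 1))))
      (Metric.isBounded_Icc 0 M)).subset
    rintro ⟨w, r⟩ ⟨h1, h2, h3⟩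
    constructor
    · simp only [Metric.mem_closedBall, dist_zero_right]
      exact norm_le_of_sumC hN ht.le h1
    · exact ⟨(objW_nonneg hN hφnn w).trans h2, h3⟩
  have hsrc_compact : IsCompact src :=
    Metric.isCompact_of_isClosed_isBounded hsrc_closed hsrc_bdd
  have hepi_compact : IsCompact epiT := by
    apply hsrc_compact.image
    exact (sumW_continuous.comp continuous_fst).prodMk continuous_snd
  have hepi_closed : IsClosed epiT := hepi_compact.isClosed
  -- convexity
  have hepi_convex : Convex ℝ epiT := by
    rintro p ⟨⟨w1, r1⟩, ⟨hw1C, hw1o, hw1M⟩, rfl⟩ q ⟨⟨w2, r2⟩, ⟨hw2C, hw2o, hw2M⟩, rfl⟩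
      a b ha hb hab
    refine ⟨(a • w1 + b • w2, a * r1 + b * r2), ⟨?_, ?_, ?_⟩, ?_⟩
    · -- sumC convex
      have : sumC N (a • w1 + b • w2) ≤ a * sumC N w1 + b * sumC N w2 := by
        rw [sumC, sumC, sumC, Finset.mul_sum, Finset.mul_sum, ← Finset.sum_add_distrib]
        apply Finset.sum_le_sum
        intro l _
        have hadd := coordNorm_add_le hN (k := l.val + 1) (Nat.succ_le_succ (Nat.zero_le _))
          (a • w1 l) (b • w2 l)
        have hs1 := coordNorm_smul hN (k := l.val + 1) (Nat.succ_le_succ (Nat.zero_le _))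
          ha (w1 l)
        have hs2 := coordNorm_smul hN (k := l.val + 1) (Nat.succ_le_succ (Nat.zero_le _))
          hb (w2 l)
        have heq : (a • w1 + b • w2) l = a • w1 l + b • w2 l := rfl
        rw [heq]
        calc coordNorm N (l.val + 1) (a • w1 l + b • w2 l)
            ≤ coordNorm N (l.val + 1) (a • w1 l) + coordNorm N (l.val + 1) (b • w2 l) := hadd
          _ = a * coordNorm N (l.val + 1) (w1 l) + b * coordNorm N (l.val + 1) (w2 l) := by
              rw [hs1, hs2]
      calc sumC N (a • w1 + b • w2) ≤ a * sumC N w1 + b * sumC N w2 := this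
        _ ≤ a * t + b * t := add_le_add (mul_le_mul_of_nonneg_left hw1C ha)
            (mul_le_mul_of_nonneg_left hw2C hb)
        _ = t := by rw [← add_mul, hab, one_mul]
    · -- objW convex
      have : objW N φ (a • w1 + b • w2) ≤ a * objW N φ w1 + b * objW N φ w2 := by
        rw [objW, objW, objW, Finset.mul_sum, Finset.mul_sum, ← Finset.sum_add_distrib]
        apply Finset.sum_le_sum
        intro l _
        have hadd := coordNorm_add_le hN (k := l.val + 1) (Nat.succ_le_succ (Nat.zero_le _))
          (a • w1 l) (b • w2 l)
        have hs1 := coordNorm_smul hN (k := l.val + 1) (Nat.succ_le_succ (Nat.zero_le _))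
          ha (w1 l)
        have hs2 := coordNorm_smul hN (k := l.val + 1) (Nat.succ_le_succ (Nat.zero_le _))
          hb (w2 l)
        have heq : (a • w1 + b • w2) l = a • w1 l + b • w2 l := rfl
        rw [heq]
        have hφl : 0 ≤ φ (l.val + 1) := hφnn _ (by omega)
        have := mul_le_mul_of_nonneg_left (hadd.trans (le_of_eq (by rw [hs1, hs2]))) hφl
        calc φ (l.val + 1) * coordNorm N (l.val + 1) (a • w1 l + b • w2 l)
            ≤ φ (l.val + 1) * (a * coordNorm N (l.val + 1) (w1 l)
              + b * coordNorm N (l.val + 1) (w2 l)) := this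
          _ = a * (φ (l.val + 1) * coordNorm N (l.val + 1) (w1 l))
              + b * (φ (l.val + 1) * coordNorm N (l.val + 1) (w2 l)) := by ring
      calc objW N φ (a • w1 + b • w2) ≤ a * objW N φ w1 + b * objW N φ w2 := this
        _ ≤ a * r1 + b * r2 := add_le_add (mul_le_mul_of_nonneg_left hw1o ha)
            (mul_le_mul_of_nonneg_left hw2o hb)
    · -- ≤ M
      calc a * r1 + b * r2 ≤ a * M + b * M := add_le_add
            (mul_le_mul_of_nonneg_left hw1M ha) (mul_le_mul_of_nonneg_left hw2M hb)
        _ = M := by rw [← add_mul, hab, one_mul]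
    · -- image equality
      have hsumW : sumW (a • w1 + b • w2) = a • sumW w1 + b • sumW w2 := by
        rw [sumW, sumW, sumW, Finset.smul_sum, Finset.smul_sum, ← Finset.sum_add_distrib]
        rfl
      simp only [hsumW, Prod.smul_mk, Prod.mk_add_mk, smul_eq_mul]
  -- the point to separate
  have hx₀ : ((x, m - ε) : (Fin d → ℝ) × ℝ) ∉ epiT := by
    rintro ⟨⟨w, r⟩, ⟨hwC, hwo, _⟩, heq⟩
    have h1 : sumW w = x := congrArg Prod.fst heq
    have h2 : r = m - ε := congrArg Prod.snd heq
    have hwmem : w ∈ Wfeas N t x := ⟨hwC, h1⟩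
    have h5 := hmin w hwmem
    have hwo' : objW N φ w ≤ r := hwo
    rw [h2] at hwo'
    linarith
  obtain ⟨f, u, hfs, hfx⟩ := geometric_hahn_banach_closed_point hepi_convex hepi_closed hx₀
  -- the slope
  set s : ℝ := f (0, 1) with hsdef
  have hxm_mem : ((x, m) : (Fin d → ℝ) × ℝ) ∈ epiT := by
    refine ⟨(w₀, m), ⟨hw₀.1, le_of_eq rfl, hmM⟩, ?_⟩
    show (sumW w₀, m) = (x, m)
    rw [hw₀.2]
  have hf_linear : ∀ (z : Fin d → ℝ) (r : ℝ), f (z, r) = f (z, 0) + r * s := by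
    intro z r
    have : ((z, r) : (Fin d → ℝ) × ℝ) = (z, 0) + r • (0, 1) := by
      simp [Prod.ext_iff]
    rw [this, map_add, map_smul, smul_eq_mul, hsdef]
  have hs_neg : s < 0 := by
    have h1 : f (x, m) < u := hfs _ hxm_mem
    have h2 : u < f (x, m - ε) := hfx
    have h3 := hf_linear x m
    have h4 := hf_linear x (m - ε)
    nlinarith
  set y : Fin d → ℝ := fun i => -(f (Pi.single i 1, 0)) / s with hydef
  have hfz : ∀ z : Fin d → ℝ, f (z, 0) = -(s * dotp z y) := by
    intro z
    have hbasis : ((z, (0:ℝ)) : (Fin d → ℝ) × ℝ)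
        = ∑ i, z i • ((Pi.single i 1 : Fin d → ℝ), (0:ℝ)) := by
      rw [Prod.ext_iff]
      constructor
      · rw [Prod.fst_sum]
        simp only [Prod.smul_mk]
        exact eq_sum_single z
      · rw [Prod.snd_sum]
        simp
    have hsne : s ≠ 0 := ne_of_lt hs_neg
    have hfe : ∀ i : Fin d, f ((Pi.single i 1 : Fin d → ℝ), (0:ℝ)) = -(s * y i) := by
      intro i
      rw [hydef]
      show f ((Pi.single i 1 : Fin d → ℝ), (0:ℝ))
          = -(s * (-(f ((Pi.single i 1 : Fin d → ℝ), (0:ℝ))) / s))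
      field_simp
    rw [hbasis, map_sum]
    simp only [map_smul, smul_eq_mul]
    calc ∑ i, z i * f ((Pi.single i 1 : Fin d → ℝ), (0:ℝ))
        = ∑ i, z i * (-(s * y i)) := Finset.sum_congr rfl fun i _ => by rw [hfe i]
      _ = -(s * dotp z y) := by
          rw [dotp, Finset.mul_sum, ← Finset.sum_neg_distrib]
          exact Finset.sum_congr rfl fun i _ => by ring
  -- key strict inequality on epiT
  have hkey : ∀ z r, ((z, r) : (Fin d → ℝ) × ℝ) ∈ epiT →
      dotp z y - r < dotp x y - (m - ε) := by
    intro z r hmem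
    have h1 : f (z, r) < u := hfs _ hmem
    have h2 : u < f (x, m - ε) := hfx
    have h3 := hf_linear z r
    have h4 := hf_linear x (m - ε)
    have h5 := hfz z
    have h6 := hfz x
    have h7 : s * (r - dotp z y) < s * ((m - ε) - dotp x y) := by nlinarith
    nlinarith [mul_lt_mul_of_neg_left (show (m - ε) - dotp x y < r - dotp z y by nlinarith) hs_neg]
  -- elements of epiT from bipolar witnesses
  have hFbound : ∀ l ≤ d, t * (dualCoord N l y - φ l) ≤ dotp x y - m + ε := by
    intro l hld
    rcases Nat.eq_zero_or_pos l with rfl | hl1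
    · rw [dualCoord_zero_k hN]
      have h0 : ((0, 0) : (Fin d → ℝ) × ℝ) ∈ epiT := by
        refine ⟨(0, 0), ⟨?_, ?_, ?_⟩, ?_⟩
        · rw [sumC_zero hN]; exact ht.le
        · rw [objW_zero hN]
        · show (0:ℝ) ≤ M
          nlinarith
        · show ((sumW 0, (0:ℝ)) : (Fin d → ℝ) × ℝ) = (0, 0)
          rw [sumW_zero]
      have := hkey 0 0 h0
      rw [dotp_zero_left] at this
      have hφ0' : 0 ≤ φ 0 := hφnn 0 (Nat.zero_le d)
      nlinarith
    · apply le_of_forall_pos_le_add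
      intro η hη
      have hη' : 0 < η / t := div_pos hη ht
      obtain ⟨x', hx'C, hx'dot⟩ := exists_bipolar_witness hN hl1 y hη'
      set lf : Fin d := ⟨l - 1, by omega⟩ with hlfdef
      have hlf1 : lf.val + 1 = l := by simp [hlfdef]; omega
      set w : Fin d → Fin d → ℝ := fun l' => if l' = lf then t • x' else 0 with hwdef
      have hwl : ∀ l' : Fin d, coordNorm N (l'.val + 1) (w l')
          = if l' = lf then coordNorm N (l'.val + 1) (t • x') else 0 := by
        intro l'
        by_cases hl' : l' = lf <;> simp [hwdef, hl', coordNorm_zero hN]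
      have hCtx' : coordNorm N l (t • x') = t * coordNorm N l x' := by
        exact coordNorm_smul hN hl1 ht.le x'
      have hCb : coordNorm N l (t • x') ≤ t := by
        rw [hCtx']
        nlinarith [coordNorm_nonneg hN hl1 x']
      have hsumCw : sumC N w = coordNorm N l (t • x') := by
        rw [sumC, Finset.sum_congr rfl (fun l' _ => hwl l'),
          Finset.sum_ite_eq' Finset.univ lf (fun l' => coordNorm N (l'.val + 1) (t • x'))]
        simp [hlf1]
      have hobjw : objW N φ w = φ l * coordNorm N l (t • x') := by
        have hwl2 : ∀ l' : Fin d, φ (l'.val + 1) * coordNorm N (l'.val + 1) (w l')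
            = if l' = lf then φ (l'.val + 1) * coordNorm N (l'.val + 1) (t • x') else 0 := by
          intro l'
          by_cases hl' : l' = lf <;> simp [hwdef, hl', coordNorm_zero hN]
        rw [objW, Finset.sum_congr rfl (fun l' _ => hwl2 l'),
          Finset.sum_ite_eq' Finset.univ lf
            (fun l' => φ (l'.val + 1) * coordNorm N (l'.val + 1) (t • x'))]
        simp [hlf1]
      have hsumWw : sumW w = t • x' := by
        rw [sumW, show (fun l' : Fin d => w l') = w from rfl]
        calc ∑ l', w l' = ∑ l' : Fin d, if l' = lf then t • x' else 0 := rfl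
          _ = t • x' := by rw [Finset.sum_ite_eq' Finset.univ lf (fun _ => t • x')]; simp
      have hφl : 0 ≤ φ l := hφnn l hld
      have hrM : φ l * coordNorm N l (t • x') ≤ M := by
        have h1 : φ l * coordNorm N l (t • x') ≤ φ l * t := by
          apply mul_le_mul_of_nonneg_left hCb hφl
        have h2 : φ l ≤ P₀ := by
          rw [hP₀def]
          have : φ l = φ (lf.val + 1) := by rw [hlf1]
          rw [this]
          exact Finset.single_le_sum (f := fun l' : Fin d => φ (l'.val + 1))
            (fun l' _ => hφnn _ (by omega)) (Finset.mem_univ lf)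
        nlinarith
      have hmem : ((t • x', φ l * coordNorm N l (t • x')) : (Fin d → ℝ) × ℝ) ∈ epiT := by
        refine ⟨(w, φ l * coordNorm N l (t • x')), ⟨?_, ?_, ?_⟩, ?_⟩
        · rw [hsumCw]; exact hCb
        · rw [hobjw]
        · exact hrM
        · show ((sumW w, φ l * coordNorm N l (t • x')) : (Fin d → ℝ) × ℝ) = _
          rw [hsumWw]
      have h8 := hkey _ _ hmem
      rw [dotp_smul_left] at h8
      have h9 : t * (dualCoord N l y - η / t) ≤ t * dotp x' y :=
        mul_le_mul_of_nonneg_left (by linarith) ht.le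
      have h10 : φ l * coordNorm N l (t • x') ≤ t * φ l := by
        rw [hCtx']
        nlinarith [coordNorm_nonneg hN hl1 x']
      have h11 : t * (dualCoord N l y - η / t) = t * dualCoord N l y - η := by
        field_simp
      nlinarith
  -- conclude
  refine ⟨y, ?_⟩
  obtain ⟨l, hld, hl⟩ := Fy_exists (N := N) φ y
  have := hFbound l hld
  rw [hl]
  nlinarith

end Aux

theorem statement14 {d : ℕ} (N : (Fin d → ℝ) → ℝ) (hN : IsNorm N) (φ : ℕ → ℝ)
    (hφnn : ∀ l ≤ d, 0 ≤ φ l) (hφ0 : φ 0 = 0) (x : Fin d → ℝ) (hx : x ≠ 0) :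
    ∃ m : ℝ,
      IsLeast
        {r : ℝ | ∃ z : ℕ → (Fin d → ℝ),
          (∑ l ∈ Finset.Icc 1 d, coordNorm N l (z l)) ≤ N x ∧
          (∑ l ∈ Finset.Icc 1 d, z l) = x ∧
          r = ∑ l ∈ Finset.Icc 1 d, φ l * coordNorm N l (z l)} m ∧
      capraBiconj N (fun z => ((φ (ell0 z) : ℝ) : EReal)) x = ((m / N x : ℝ) : EReal) := by
  have hd : 0 < d := by
    rcases Nat.eq_zero_or_pos d with h0 | h
    · exfalso
      apply hx
      funext i
      have := i.is_lt
      omega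
    · exact h
  have ht : 0 < N x :=
    lt_of_le_of_ne (hN.nonneg x) fun h => hx ((hN.eq_zero_iff x).mp h.symm)
  obtain ⟨w₀, hw₀, hmin, hleast⟩ := isLeast_min hN hd (φ := φ) x
  refine ⟨objW N φ w₀, hleast, ?_⟩
  rw [capraBiconj]
  have hterm : ∀ y : Fin d → ℝ,
      ((capra N x y : ℝ) : EReal) + (- capraConj N (fun z => ((φ (ell0 z) : ℝ) : EReal)) y)
      = (((capra N x y - Fy N φ y : ℝ)) : EReal) := by
    intro y
    rw [capraConj_eq hN hφnn hφ0 y, ← EReal.coe_neg, ← EReal.coe_add, sub_eq_add_neg]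
  simp_rw [hterm]
  apply iSup_coe_eq
  · intro y
    have h1 := easy_bound hN hφ0 hw₀ y
    rw [capra, if_neg hx, sub_le_iff_le_add, div_le_iff₀ ht]
    have h2 : (objW N φ w₀ / N x + Fy N φ y) * N x
        = N x * Fy N φ y + objW N φ w₀ := by
      field_simp
      ring
    rw [h2]
    exact h1
  · intro ε hε
    have hε' : 0 < N x * ε := mul_pos ht hε
    obtain ⟨y, hy⟩ := separation_step hN hd hφnn hx hw₀ hmin hε'
    refine ⟨y, ?_⟩
    rw [capra, if_neg hx]
    have h2 : (objW N φ w₀ - N x * ε) / N x ≤ (dotp x y - N x * Fy N φ y) / N x := by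
      rw [div_le_div_iff_of_pos_right ht]
      linarith

    rw [sub_div, sub_div, mul_div_cancel_left₀ _ ht.ne', mul_div_cancel_left₀ _ ht.ne'] at h2
    linarith
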